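/- Let N ≥ 2, M = (m_{i,j}) ∈ M(N,r), and fix 1 ≤ j ≤ N−1 and 1 ≤ h ≤ N−1. If l is an integer with σ_{h−1,j} + m_{h,j} < l < σ_{h,j} and l ≥ m̃_{h,j} + 1, then s_l · (w_{2,j} w_{3,j} ⋯ w_{N,j}) = (w_{2,j} w_{3,j} ⋯ w_{N,j}) · s_{l + Σ_{i=h+1}^{N} m_{i,j}}. -/

import Mathlib

open Equiv Finset

/-- The simple transposition `s i = (i, i+1)` (1-based) in the symmetric group `W` on
`{1, …, r}`, realised as `Equiv.Perm (Fin r)`, where the point `x : Fin r` carries the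
label `x.val + 1`.  For `i` outside the range `1 ≤ i < r` we set `s i = 1`. -/
def sT (r : ℕ) (i : ℕ) : Equiv.Perm (Fin r) :=
  if h : 1 ≤ i ∧ i < r then Equiv.swap ⟨i - 1, by omega⟩ ⟨i, h.2⟩ else 1

/-- The ascending product `s_a · s_{a+1} ⋯ s_{a+n-1}` (equal to `1` when `n = 0`);
the rightmost factor acts first. -/
def ascProd (r a n : ℕ) : Equiv.Perm (Fin r) :=
  ((List.range n).map (fun t => sT r (a + t))).prod

/-- The descending product `s_b · s_{b-1} ⋯ s_{b-n+1}` (equal to `1` when `n = 0`);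
the rightmost factor acts first. -/
def descProd (r b n : ℕ) : Equiv.Perm (Fin r) :=
  ((List.range n).map (fun t => sT r (b - t))).prod

/-- The Coxeter length `ℓ(w)`, i.e. the number of inversions of `w`. -/
def clen {r : ℕ} (w : Equiv.Perm (Fin r)) : ℕ :=
  (Finset.univ.filter (fun p : Fin r × Fin r => p.1 < p.2 ∧ w p.2 < w p.1)).card

/-- `ptil lam i` is the partial sum `λ̃_i = λ_1 + ⋯ + λ_i` (1-based `i`). -/
def ptil {N : ℕ} (lam : Fin N → ℕ) (i : ℕ) : ℕ :=
  ∑ l : Fin N, if l.val + 1 ≤ i then lam l else 0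

/-- The block `N_i^λ = {λ̃_{i-1}+1, …, λ̃_i}` (1-based `i`), as a set of points of `Fin r`
(the point `x` has label `x.val + 1`). -/
def blockSet (r : ℕ) {N : ℕ} (lam : Fin N → ℕ) (i : ℕ) : Finset (Fin r) :=
  Finset.univ.filter (fun x => ptil lam (i - 1) ≤ x.val ∧ x.val < ptil lam i)

/-- The index of the block of `λ` containing the point `x`. -/
def blockOf {r N : ℕ} (lam : Fin N → ℕ) (x : Fin r) : ℕ :=
  ((Finset.range N).filter (fun i => ptil lam (i + 1) ≤ x.val)).card

/-- The Young subgroup `W_λ`: all permutations stabilizing each block `N_i^λ`. -/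
def young (r : ℕ) {N : ℕ} (lam : Fin N → ℕ) : Subgroup (Equiv.Perm (Fin r)) where
  carrier := {w | ∀ x : Fin r, blockOf lam (w x) = blockOf lam x}
  one_mem' := by intro x; rfl
  mul_mem' := by
    intro a b ha hb x
    have h := (ha (b x)).trans (hb x)
    simpa [Equiv.Perm.mul_apply] using h
  inv_mem' := by
    intro a ha x
    have h := ha (a⁻¹ x)
    simpa using h.symm

/-- The double coset `W_λ d W_μ`, as a set of permutations. -/
def dcoset (r : ℕ) {N : ℕ} (lam mu : Fin N → ℕ) (d : Equiv.Perm (Fin r)) :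
    Set (Equiv.Perm (Fin r)) :=
  {w | ∃ x ∈ young r lam, ∃ y ∈ young r mu, w = x * d * y}

/-- `d ∈ 𝒟_{λμ}`: `d` has minimal length in its double coset `W_λ d W_μ`. -/
def isMinRep (r : ℕ) {N : ℕ} (lam mu : Fin N → ℕ) (d : Equiv.Perm (Fin r)) : Prop :=
  ∀ w ∈ dcoset r lam mu d, clen d ≤ clen w

/-- The composition `ro M` of row sums of a matrix. -/
def rowSums {N : ℕ} (M : Fin N → Fin N → ℕ) : Fin N → ℕ := fun i => ∑ j, M i j

/-- The composition `co M` of column sums of a matrix. -/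
def colSums {N : ℕ} (M : Fin N → Fin N → ℕ) : Fin N → ℕ := fun j => ∑ i, M i j

/-- `d` is the distinguished double coset representative `d_M` attached to the matrix `M`:
`d` is the minimal length element in its `(W_{ro M}, W_{co M})` double coset, and
`|N_i^{ro M} ∩ d(N_j^{co M})| = m_{i,j}` for all `i, j`. -/
def isDM (r : ℕ) {N : ℕ} (M : Fin N → Fin N → ℕ) (d : Equiv.Perm (Fin r)) : Prop :=
  isMinRep r (rowSums M) (colSums M) d ∧
    ∀ i j : Fin N,
      ((blockSet r (rowSums M) (i.val + 1)) ∩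
        (blockSet r (colSums M) (j.val + 1)).image d).card = M i j

/-- The `(i,j)` entry of `M` with 1-based indices (`0` outside the range). -/
def ent {N : ℕ} (M : Fin N → Fin N → ℕ) (i j : ℕ) : ℕ :=
  if h : 1 ≤ i ∧ i ≤ N ∧ 1 ≤ j ∧ j ≤ N then M ⟨i - 1, by omega⟩ ⟨j - 1, by omega⟩ else 0

/-- `μ̃_{j-1}` for `μ = co M`: the sum of the first `j - 1` column sums of `M`. -/
def colPS {N : ℕ} (M : Fin N → Fin N → ℕ) (j : ℕ) : ℕ :=
  ∑ p : Fin N × Fin N, if p.2.val + 1 < j then M p.1 p.2 else 0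

/-- `σ_{i,j} = μ̃_{j-1} + Σ_{k ≤ i, l ≥ j} m_{k,l}` (1-based `i, j`). -/
def sigmaS {N : ℕ} (M : Fin N → Fin N → ℕ) (i j : ℕ) : ℕ :=
  colPS M j + ∑ p : Fin N × Fin N, if p.1.val + 1 ≤ i ∧ j ≤ p.2.val + 1 then M p.1 p.2 else 0

/-- `m̃_{i,j} = μ̃_{j-1} + Σ_{h ≤ i} m_{h,j}` (1-based `i, j`): the partial sum of the
column-reading sequence of `M` up to the entry `(i, j)`. -/
def mtil {N : ℕ} (M : Fin N → Fin N → ℕ) (i j : ℕ) : ℕ :=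
  colPS M j + ∑ p : Fin N × Fin N, if p.1.val + 1 ≤ i ∧ p.2.val + 1 = j then M p.1 p.2 else 0

/-- The element `w_{i,j}` (1-based `i, j`):
`w_{i,j} = (s_{σ_{i-1,j}} ⋯ s_{m̃_{i-1,j}+1})(s_{σ_{i-1,j}+1} ⋯ s_{m̃_{i-1,j}+2}) ⋯
(s_{σ_{i-1,j}+m_{i,j}-1} ⋯ s_{m̃_{i,j}})`, with `w_{i,j} = 1` when `m_{i,j} = 0` or
`σ_{i-1,j} = m̃_{i-1,j}`. -/
def wE (r : ℕ) {N : ℕ} (M : Fin N → Fin N → ℕ) (i j : ℕ) : Equiv.Perm (Fin r) :=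
  ((List.range (ent M i j)).map
    (fun x => descProd r (sigmaS M (i - 1) j + x) (sigmaS M (i - 1) j - mtil M (i - 1) j))).prod

/-- The column product `w_{2,j} w_{3,j} ⋯ w_{N,j}`. -/
def colProd (r : ℕ) {N : ℕ} (M : Fin N → Fin N → ℕ) (j : ℕ) : Equiv.Perm (Fin r) :=
  ((List.range (N - 1)).map (fun t => wE r M (t + 2) j)).prod

/-- `Π_t`: the product of the first `t` column products
`(w_{2,1} ⋯ w_{N,1})(w_{2,2} ⋯ w_{N,2}) ⋯ (w_{2,t} ⋯ w_{N,t})`. -/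
def piProd (r : ℕ) {N : ℕ} (M : Fin N → Fin N → ℕ) (t : ℕ) : Equiv.Perm (Fin r) :=
  ((List.range t).map (fun c => colProd r M (c + 1))).prod

lemma swap_comm' {α} [DecidableEq α] {x y z w : α} (h1 : x ≠ z) (h2 : x ≠ w)
    (h3 : y ≠ z) (h4 : y ≠ w) :
    Commute (Equiv.swap x y) (Equiv.swap z w) := by
  apply Equiv.ext; intro t
  simp only [Equiv.Perm.mul_apply, Equiv.swap_apply_def]
  split_ifs <;> simp_all

lemma sT_comm {r a b : ℕ} (h : a + 2 ≤ b) : Commute (sT r a) (sT r b) := by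
  unfold sT
  split_ifs with h1 h2 h2
  · refine swap_comm' ?_ ?_ ?_ ?_ <;>
      (intro he; simp only [Fin.mk.injEq] at he; omega)
  · exact Commute.one_right _
  · exact Commute.one_left _
  · exact Commute.one_left _

lemma sT_braid {r k : ℕ} (hk : 1 ≤ k) (hkr : k + 1 < r) :
    sT r k * sT r (k + 1) * sT r k = sT r (k + 1) * sT r k * sT r (k + 1) := by
  unfold sT
  rw [dif_pos ⟨hk, by omega⟩, dif_pos ⟨by omega, hkr⟩]
  have e1 : (⟨k + 1 - 1, by omega⟩ : Fin r) = ⟨k, by omega⟩ := rfl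
  rw [e1]
  set a : Fin r := ⟨k - 1, by omega⟩
  set b : Fin r := ⟨k, by omega⟩
  set c : Fin r := ⟨k + 1, hkr⟩
  have hab : a ≠ b := by intro he; simp only [a, b, Fin.mk.injEq] at he; omega
  have hac : a ≠ c := by intro he; simp only [a, c, Fin.mk.injEq] at he; omega
  have hbc : b ≠ c := by intro he; simp only [b, c, Fin.mk.injEq] at he; omega
  have L : swap a b * swap b c * swap a b = swap a c := by
    rw [swap_comm a b, swap_comm b c]
    exact Equiv.swap_mul_swap_mul_swap hbc.symm hac.symm
  have R : swap b c * swap a b * swap b c = swap a c :=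
    (Equiv.swap_mul_swap_mul_swap hab hac).trans (swap_comm c a)
  exact L.trans R.symm

lemma descProd_succ (r b n : ℕ) :
    descProd r b (n + 1) = descProd r b n * sT r (b - n) := by
  unfold descProd
  rw [List.range_succ, List.map_append, List.prod_append, List.map_singleton,
    List.prod_singleton]

lemma comm_small {r k b n : ℕ} (h : k + n + 1 ≤ b) : Commute (sT r k) (descProd r b n) := by
  apply Commute.list_prod_right
  intro x hx
  simp only [List.mem_map, List.mem_range] at hx
  obtain ⟨t, ht, rfl⟩ := hx
  exact sT_comm (by omega)

lemma comm_large {r l b n : ℕ} (h : b + 2 ≤ l) : Commute (sT r l) (descProd r b n) := by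
  apply Commute.list_prod_right
  intro x hx
  simp only [List.mem_map, List.mem_range] at hx
  obtain ⟨t, ht, rfl⟩ := hx
  exact (sT_comm (by omega)).symm

lemma sT_descProd {r b k : ℕ} (n : ℕ) (hbr : b < r) (h1 : b + 1 ≤ k + n) (h2 : k + 1 ≤ b)
    (hk : 1 ≤ k) :
    sT r k * descProd r b n = descProd r b n * sT r (k + 1) := by
  induction n with
  | zero => omega
  | succ n ih =>
    rw [descProd_succ]
    by_cases hc : b + 1 ≤ k + n
    · rw [← mul_assoc, ih hc, mul_assoc, mul_assoc,
        (sT_comm (a := b - n) (b := k + 1) (by omega)).eq]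
    · -- b = k + n, n ≥ 1
      have hbk : b = k + n := by omega
      have hn : 1 ≤ n := by omega
      obtain ⟨n', rfl⟩ : ∃ n', n = n' + 1 := ⟨n - 1, by omega⟩
      have hbn : b - (n' + 1) = k := by omega
      have hbn' : b - n' = k + 1 := by omega
      rw [hbn, descProd_succ, hbn']
      have hcomm : Commute (sT r k) (descProd r b n') := comm_small (by omega)
      calc sT r k * (descProd r b n' * sT r (k + 1) * sT r k)
          = descProd r b n' * (sT r k * sT r (k + 1) * sT r k) := by
            rw [← mul_assoc, ← mul_assoc, ← mul_assoc, hcomm.eq]; group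
        _ = descProd r b n' * (sT r (k + 1) * sT r k * sT r (k + 1)) := by
            rw [sT_braid hk (by omega)]
        _ = descProd r b n' * sT r (k + 1) * sT r k * sT r (k + 1) := by
            group

lemma sT_chain {r s mt : ℕ} (m : ℕ) (l' : ℕ) (h1 : mt + 1 ≤ l') (h2 : l' + 1 ≤ s)
    (h3 : s + m ≤ r) :
    sT r l' * ((List.range m).map (fun x => descProd r (s + x) (s - mt))).prod
      = ((List.range m).map (fun x => descProd r (s + x) (s - mt))).prod * sT r (l' + m) := by
  induction m generalizing l' with
  | zero => simp
  | succ m ih =>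
    rw [List.range_succ, List.map_append, List.prod_append, List.map_singleton,
      List.prod_singleton, ← mul_assoc, ih l' h1 h2 (by omega), mul_assoc,
      sT_descProd (s - mt) (by omega) (by omega) (by omega) (by omega), ← mul_assoc]
    ring_nf

lemma sT_wE {r N : ℕ} (M : Fin N → Fin N → ℕ) (i j l' : ℕ)
    (h1 : mtil M (i - 1) j + 1 ≤ l') (h2 : l' + 1 ≤ sigmaS M (i - 1) j)
    (h3 : sigmaS M (i - 1) j + ent M i j ≤ r) :
    sT r l' * wE r M i j = wE r M i j * sT r (l' + ent M i j) := by
  unfold wE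
  exact sT_chain (ent M i j) l' h1 h2 h3

lemma wE_comm {r N : ℕ} (M : Fin N → Fin N → ℕ) (i j l : ℕ)
    (h : sigmaS M (i - 1) j + ent M i j + 1 ≤ l) :
    Commute (sT r l) (wE r M i j) := by
  apply Commute.list_prod_right
  intro x hx
  simp only [List.mem_map, List.mem_range] at hx
  obtain ⟨t, ht, rfl⟩ := hx
  exact comm_large (by omega)

lemma sum_prod_eq {N r : ℕ} (M : Fin N → Fin N → ℕ) (hMr : ∑ i, ∑ j, M i j = r) :
    ∑ p : Fin N × Fin N, M p.1 p.2 = r := by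
  rw [← hMr, Fintype.sum_prod_type]

lemma sigmaS_le_r {N r : ℕ} (M : Fin N → Fin N → ℕ) (hMr : ∑ i, ∑ j, M i j = r)
    (i j : ℕ) : sigmaS M i j ≤ r := by
  rw [← sum_prod_eq M hMr]
  unfold sigmaS colPS
  rw [← Finset.sum_add_distrib]
  apply Finset.sum_le_sum
  intro p _
  split_ifs <;> omega

lemma sigmaS_mono {N : ℕ} (M : Fin N → Fin N → ℕ) {i i' : ℕ} (j : ℕ) (h : i ≤ i') :
    sigmaS M i j ≤ sigmaS M i' j := by
  unfold sigmaS
  gcongr with p hp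
  split_ifs <;> omega

lemma mtil_succ {N : ℕ} (M : Fin N → Fin N → ℕ) {i j : ℕ} (hi1 : 1 ≤ i) (hiN : i ≤ N)
    (hj1 : 1 ≤ j) (hjN : j ≤ N) :
    mtil M i j = mtil M (i - 1) j + ent M i j := by
  unfold mtil
  rw [add_assoc]
  congr 1
  have hent : ent M i j = ∑ p : Fin N × Fin N,
      if p = (⟨i - 1, by omega⟩, ⟨j - 1, by omega⟩) then M p.1 p.2 else 0 := by
    rw [Finset.sum_ite_eq' Finset.univ (⟨i - 1, by omega⟩, (⟨j - 1, by omega⟩ : Fin N))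
      (fun p => M p.1 p.2) |>.trans (if_pos (Finset.mem_univ _))]
    simp [ent, hi1, hiN, hj1, hjN]
  rw [hent, ← Finset.sum_add_distrib]
  apply Finset.sum_congr rfl
  intro p _
  have hval : (p = (⟨i - 1, by omega⟩, ⟨j - 1, by omega⟩)) ↔
      (p.1.val = i - 1 ∧ p.2.val = j - 1) := by
    constructor
    · intro h; subst h; exact ⟨rfl, rfl⟩
    · rintro ⟨a, b⟩; exact Prod.ext (Fin.ext a) (Fin.ext b)
  simp only [hval]
  have h1 := p.1.isLt
  have h2 := p.2.isLt
  split_ifs <;> first | rfl | omega | (exfalso; omega) | simp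

lemma sigmaS_step {N : ℕ} (M : Fin N → Fin N → ℕ) {i j : ℕ} (hi1 : 1 ≤ i) (hiN : i ≤ N)
    (hj1 : 1 ≤ j) (hjN : j ≤ N) :
    sigmaS M (i - 1) j + ent M i j ≤ sigmaS M i j := by
  have hent : ent M i j = ∑ p : Fin N × Fin N,
      if p = (⟨i - 1, by omega⟩, ⟨j - 1, by omega⟩) then M p.1 p.2 else 0 := by
    rw [Finset.sum_ite_eq' Finset.univ (⟨i - 1, by omega⟩, (⟨j - 1, by omega⟩ : Fin N))
      (fun p => M p.1 p.2) |>.trans (if_pos (Finset.mem_univ _))]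
    simp [ent, hi1, hiN, hj1, hjN]
  unfold sigmaS
  rw [hent, add_assoc, ← Finset.sum_add_distrib]
  gcongr with p hp
  have hval : (p = (⟨i - 1, by omega⟩, ⟨j - 1, by omega⟩)) ↔
      (p.1.val = i - 1 ∧ p.2.val = j - 1) := by
    constructor
    · intro h; subst h; exact ⟨rfl, rfl⟩
    · rintro ⟨a, b⟩; exact Prod.ext (Fin.ext a) (Fin.ext b)
  simp only [hval]
  split_ifs <;> first | rfl | omega | (exfalso; omega) | simp

lemma mtil_range {N : ℕ} (M : Fin N → Fin N → ℕ) {h i j : ℕ} (hh : h ≤ i) (hiN : i ≤ N)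
    (hj1 : 1 ≤ j) (hjN : j ≤ N) :
    mtil M i j = mtil M h j + ∑ i' ∈ Finset.Icc (h + 1) i, ent M i' j := by
  induction i with
  | zero =>
    have : h = 0 := by omega
    subst this
    simp
  | succ i ih =>
    rcases Nat.eq_or_lt_of_le hh with he | hlt
    · subst he; simp
    · have hhi : h ≤ i := by omega
      rw [Finset.sum_Icc_succ_top (by omega : h + 1 ≤ i + 1), ← add_assoc,
        ← ih hhi (by omega),
        mtil_succ M (by omega : 1 ≤ i + 1) hiN hj1 hjN]
      simp

lemma sigmaS_range {N : ℕ} (M : Fin N → Fin N → ℕ) {h i j : ℕ} (hh : h ≤ i) (hiN : i ≤ N)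
    (hj1 : 1 ≤ j) (hjN : j ≤ N) :
    sigmaS M h j + ∑ i' ∈ Finset.Icc (h + 1) i, ent M i' j ≤ sigmaS M i j := by
  induction i with
  | zero =>
    have : h = 0 := by omega
    subst this
    simp
  | succ i ih =>
    rcases Nat.eq_or_lt_of_le hh with he | hlt
    · subst he; simp
    · have hhi : h ≤ i := by omega
      rw [Finset.sum_Icc_succ_top (by omega : h + 1 ≤ i + 1), ← add_assoc]
      calc sigmaS M h j + (∑ i' ∈ Finset.Icc (h + 1) i, ent M i' j) + ent M (i + 1) j
          ≤ sigmaS M i j + ent M (i + 1) j := by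
            have := ih hhi (by omega)
            omega
        _ ≤ sigmaS M (i + 1) j := by
            have := sigmaS_step M (by omega : 1 ≤ i + 1) hiN hj1 hjN
            simpa using this


/-- Lemma `reflection`(2).  For `1 ≤ j ≤ N-1`, `1 ≤ h ≤ N-1` (1-based)
and `σ_{h-1,j} + m_{h,j} < l < σ_{h,j}` with `l ≥ m̃_{h,j} + 1`:
`s_l · (w_{2,j} w_{3,j} ⋯ w_{N,j}) = (w_{2,j} w_{3,j} ⋯ w_{N,j}) · s_{l + Σ_{i=h+1}^N m_{i,j}}`. -/
theorem stmt6 (N r : ℕ) (hN : 2 ≤ N) (M : Fin N → Fin N → ℕ)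
    (hMr : ∑ i, ∑ j, M i j = r)
    (j h : ℕ) (hj1 : 1 ≤ j) (hjN : j ≤ N - 1) (hh1 : 1 ≤ h) (hhN : h ≤ N - 1)
    (l : ℕ) (hl1 : sigmaS M (h - 1) j + ent M h j < l) (hl2 : l < sigmaS M h j)
    (hl3 : mtil M h j + 1 ≤ l) :
    sT r l * colProd r M j
      = colProd r M j * sT r (l + ∑ i ∈ Finset.Icc (h + 1) N, ent M i j) := by
  have hjN' : j ≤ N := by omega
  have key : ∀ a : ℕ, a ≤ N - 1 →
      sT r l * ((List.range a).map (fun t => wE r M (t + 2) j)).prod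
        = ((List.range a).map (fun t => wE r M (t + 2) j)).prod
          * sT r (l + ∑ i ∈ Finset.Icc (h + 1) (a + 1), ent M i j) := by
    intro a
    induction a with
    | zero =>
      intro _
      simp [Finset.Icc_eq_empty (show ¬ h + 1 ≤ 0 + 1 by omega)]
    | succ a ih =>
      intro ha
      rw [List.range_succ, List.map_append, List.prod_append, List.map_singleton,
        List.prod_singleton, ← mul_assoc, ih (by omega), mul_assoc]
      by_cases hcase : a + 2 ≤ h
      · -- commuting case: the sums are empty
        have e1 : Finset.Icc (h + 1) (a + 1) = ∅ := Finset.Icc_eq_empty (by omega)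
        have e2 : Finset.Icc (h + 1) (a + 2) = ∅ := Finset.Icc_eq_empty (by omega)
        rw [e1, e2]
        simp only [Finset.sum_empty, add_zero]
        have hbound : sigmaS M (a + 2 - 1) j + ent M (a + 2) j + 1 ≤ l := by
          rcases Nat.eq_or_lt_of_le hcase with he | hlt
          · have : a + 2 - 1 = h - 1 := by omega
            rw [he] at *
            omega
          · -- a + 2 < h
            have s1 : sigmaS M (a + 2 - 1) j + ent M (a + 2) j ≤ sigmaS M (a + 2) j :=
              sigmaS_step M (by omega) (by omega) hj1 hjN'
            have s2 : sigmaS M (a + 2) j ≤ sigmaS M (h - 1) j :=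
              sigmaS_mono M j (by omega)
            omega
        rw [mul_assoc, (wE_comm M (a + 2) j l hbound).eq, ← mul_assoc]
      · -- shifting case: a + 2 ≥ h + 1
        have hha : h ≤ a + 1 := by omega
        set S := ∑ i ∈ Finset.Icc (h + 1) (a + 1), ent M i j with hS
        have hm : mtil M (a + 1) j = mtil M h j + S :=
          mtil_range M hha (by omega) hj1 hjN'
        have hs : sigmaS M h j + S ≤ sigmaS M (a + 1) j :=
          sigmaS_range M hha (by omega) hj1 hjN'
        have hstep : sigmaS M (a + 2 - 1) j + ent M (a + 2) j ≤ sigmaS M (a + 2) j :=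
          sigmaS_step M (by omega) (by omega) hj1 hjN'
        have hr : sigmaS M (a + 2) j ≤ r := sigmaS_le_r M hMr (a + 2) j
        have e1 : a + 2 - 1 = a + 1 := by omega
        rw [sT_wE M (a + 2) j (l + S) (by rw [e1]; omega) (by rw [e1]; omega)
          (by omega)]
        rw [Finset.sum_Icc_succ_top (by omega : h + 1 ≤ a + 2), ← hS]
        rw [add_assoc, ← mul_assoc]
  have := key (N - 1) le_rfl
  unfold colProd
  rw [show N - 1 + 1 = N by omega] at this
  exact this
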